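/- Let Ω = A_Ω ∘ I(ℓ) + B_Ω ∘ J(ℓ) be a positive definite uniform-block matrix with A_Ω = diag(a_{Ω,11},...,a_{Ω,GG}) and Δ_Ω = A_Ω + B_Ω L, L = diag(L_1,...,L_G). Then log det(Ω) = ∑_{g=1}^G (L_g - 1) log(a_{Ω,gg}) + log det(Δ_Ω). -/

import Mathlib

open Matrix BigOperators

/-- The uniform-block matrix `N(A, B, ℓ) = A ∘ I(ℓ) + B ∘ J(ℓ)`. -/
def UB (G : ℕ) (L : Fin G → ℕ) (a : Fin G → ℝ) (B : Matrix (Fin G) (Fin G) ℝ) :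
    Matrix ((g : Fin G) × Fin (L g)) ((g : Fin G) × Fin (L g)) ℝ :=
  Matrix.of fun i j => (if i = j then a i.1 else 0) + B i.1 j.1

section Aux

variable (G : ℕ) (L : Fin G → ℕ) (hL : ∀ g, 0 < L g)
include hL

/-- Split each block index into its first coordinate versus the rest. -/
def blockEquiv : ((g : Fin G) × Fin (L g)) ≃
    (Fin G ⊕ (g : Fin G) × {i : Fin (L g) // i ≠ ⟨0, hL g⟩}) where
  toFun x := if h : x.2 = ⟨0, hL x.1⟩ then Sum.inl x.1 else Sum.inr ⟨x.1, x.2, h⟩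
  invFun y := Sum.elim (fun g => ⟨g, ⟨0, hL g⟩⟩) (fun p => ⟨p.1, p.2.1⟩) y
  left_inv x := by
    rcases x with ⟨g, i⟩
    by_cases h : i = ⟨0, hL g⟩ <;> simp [h]
  right_inv y := by
    rcases y with g | ⟨g, i, h⟩
    · simp
    · simp [h]

lemma card_ne_zero (g : Fin G) :
    Fintype.card {i : Fin (L g) // i ≠ ⟨0, hL g⟩} = L g - 1 := by
  have h := Fintype.card_subtype_compl (fun i : Fin (L g) => i = ⟨0, hL g⟩)
  simpa [Fintype.card_subtype_eq] using h

lemma UB_det (a : Fin G → ℝ) (B : Matrix (Fin G) (Fin G) ℝ) :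
    (UB G L a B).det =
      (∏ g, a g ^ (L g - 1)) *
        (Matrix.diagonal a + Matrix.diagonal (fun g => (L g : ℝ)) * B).det := by
  classical
  set κ := (g : Fin G) × {i : Fin (L g) // i ≠ (⟨0, hL g⟩ : Fin (L g))} with hκ
  set P : Matrix (Fin G) (Fin G) ℝ := Matrix.of fun g h => (if g = h then a g else 0) + B g h
    with hP
  set Q : Matrix (Fin G) κ ℝ := Matrix.of fun g q => B g q.1 with hQ
  set R : Matrix κ (Fin G) ℝ := Matrix.of fun p h => B p.1 h with hR
  set S : Matrix κ κ ℝ :=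
    Matrix.of fun p q => (if p = q then a p.1 else 0) + B p.1 q.1 with hS
  set F12 : Matrix (Fin G) κ ℝ := Matrix.of fun g q => if g = q.1 then 1 else 0 with hF12
  set E12 : Matrix (Fin G) κ ℝ := Matrix.of fun g q => if g = q.1 then -1 else 0 with hE12
  set Δ' : Matrix (Fin G) (Fin G) ℝ :=
    Matrix.diagonal a + Matrix.diagonal (fun g => (L g : ℝ)) * B with hΔ'
  set S0 : Matrix κ κ ℝ := Matrix.diagonal (fun p : κ => a p.1) with hS0
  have hcast : ∀ g : Fin G, ((L g - 1 : ℕ) : ℝ) = (L g : ℝ) - 1 := by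
    intro g; rw [Nat.cast_sub (hL g)]; simp
  -- sums over κ
  have hsum : ∀ (g : Fin G) (f : Fin G → ℝ),
      (∑ q : κ, if g = q.1 then f q.1 else 0) = ((L g - 1 : ℕ) : ℝ) * f g := by
    intro g f
    rw [← Finset.univ_sigma_univ, Finset.sum_sigma]
    have h1 : ∀ k : Fin G,
        (∑ _i : {i : Fin (L k) // i ≠ ⟨0, hL k⟩}, if g = k then f k else 0)
          = if g = k then ((L k - 1 : ℕ) : ℝ) * f k else 0 := by
      intro k
      by_cases h : g = k <;>
        simp [h, Finset.sum_const, card_ne_zero G L hL, mul_comm]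
    simp only [h1]
    simp
  have hsum2 : ∀ (g : Fin G) (q : κ) (c : κ → ℝ),
      (∑ p : κ, if g = p.1 then (if p = q then c p else 0) else 0)
        = if g = q.1 then c q else 0 := by
    intro g q c
    have h1 : ∀ p : κ, (if g = p.1 then (if p = q then c p else 0) else 0)
        = if p = q then (if g = q.1 then c q else 0) else 0 := by
      intro p
      by_cases h : p = q
      · subst h; simp
      · simp [h]
    simp only [h1]
    rw [Fintype.sum_eq_single q (fun x hx => by simp [hx])]
    simp
  -- the submatrix equals a block matrix
  have hmk : ∀ p q : κ, ((⟨p.1, p.2.1⟩ : (g : Fin G) × Fin (L g)) = ⟨q.1, q.2.1⟩) ↔ p = q := by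
    intro p q
    constructor
    · rcases p with ⟨p1, p2, hp⟩
      rcases q with ⟨q1, q2, hq⟩
      intro h
      obtain ⟨h1, h2⟩ := Sigma.mk.inj_iff.mp h
      subst h1
      simp only [heq_eq_eq] at h2
      subst h2
      rfl
    · rintro rfl; rfl
  have hsub : (UB G L a B).submatrix (blockEquiv G L hL).symm (blockEquiv G L hL).symm
      = fromBlocks P Q R S := by
    ext i j
    have hsy1 : ∀ g : Fin G, (blockEquiv G L hL).symm (Sum.inl g) = ⟨g, ⟨0, hL g⟩⟩ :=
      fun g => rfl
    have hsy2 : ∀ p : κ, (blockEquiv G L hL).symm (Sum.inr p) = ⟨p.1, p.2.1⟩ :=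
      fun p => rfl
    rcases i with g | p <;> rcases j with h | q
    · by_cases hgh : g = h
      · subst hgh
        simp [Matrix.submatrix_apply, hsy1, UB, fromBlocks, hP]
      · have hiff : ((⟨g, ⟨0, hL g⟩⟩ : (g : Fin G) × Fin (L g)) = ⟨h, ⟨0, hL h⟩⟩) ↔ g = h := by
          constructor
          · intro hh; exact (Sigma.mk.inj_iff.mp hh).1
          · rintro rfl; rfl
        simp [Matrix.submatrix_apply, hsy1, UB, fromBlocks, hP, hiff, hgh]
    · have hne : ((⟨g, ⟨0, hL g⟩⟩ : (g : Fin G) × Fin (L g)) = ⟨q.1, q.2.1⟩) → False := by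
        intro hh
        obtain ⟨h1, h2⟩ := Sigma.mk.inj_iff.mp hh
        subst h1
        simp only [heq_eq_eq] at h2
        exact q.2.2 h2.symm
      simp only [Matrix.submatrix_apply, hsy1, hsy2, UB, Matrix.of_apply, fromBlocks,
        Sum.elim_inl, Sum.elim_inr, hQ]
      rw [if_neg hne]
      simp
    · have hne : ((⟨p.1, p.2.1⟩ : (g : Fin G) × Fin (L g)) = ⟨h, ⟨0, hL h⟩⟩) → False := by
        intro hh
        obtain ⟨h1, h2⟩ := Sigma.mk.inj_iff.mp hh
        subst h1
        simp only [heq_eq_eq] at h2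
        exact p.2.2 h2
      simp only [Matrix.submatrix_apply, hsy1, hsy2, UB, Matrix.of_apply, fromBlocks,
        Sum.elim_inl, Sum.elim_inr, hR]
      rw [if_neg hne]
      simp
    · by_cases hpq : p = q
      · subst hpq
        simp [Matrix.submatrix_apply, hsy2, UB, fromBlocks, hS]
      · simp [Matrix.submatrix_apply, hsy2, UB, fromBlocks, hS, hmk, hpq]
  -- entrywise formulas for the products
  have hFR : ∀ g h, (F12 * R) g h = ((L g - 1 : ℕ) : ℝ) * B g h := by
    intro g h
    rw [Matrix.mul_apply]
    have h1 : ∀ q : κ, F12 g q * R q h = if g = q.1 then B q.1 h else 0 := by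
      intro q; by_cases hq : g = q.1 <;> simp [hF12, hR, hq]
    simp only [h1]
    exact hsum g (fun k => B k h)
  have hFS : ∀ (g : Fin G) (q : κ),
      (F12 * S) g q = (if g = q.1 then a q.1 else 0) + ((L g - 1 : ℕ) : ℝ) * B g q.1 := by
    intro g q
    rw [Matrix.mul_apply]
    have h1 : ∀ p : κ, F12 g p * S p q
        = (if g = p.1 then (if p = q then a p.1 else 0) else 0)
          + (if g = p.1 then B p.1 q.1 else 0) := by
      intro p; by_cases hp : g = p.1 <;> simp [hF12, hS, hp]
    simp only [h1]
    rw [Finset.sum_add_distrib, hsum2 g q (fun p => a p.1), hsum g (fun k => B k q.1)]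
  have hXE : ∀ (X : Matrix (Fin G) (Fin G) ℝ) (g : Fin G) (q : κ),
      (X * E12) g q = -X g q.1 := by
    intro X g q
    rw [Matrix.mul_apply]
    have h1 : ∀ h : Fin G, X g h * E12 h q = if h = q.1 then -X g q.1 else 0 := by
      intro h; by_cases hh : h = q.1 <;> simp [hE12, hh]
    simp only [h1, Finset.sum_ite_eq']
    simp
  have hRE : ∀ (p q : κ), (R * E12) p q = -B p.1 q.1 := by
    intro p q
    rw [Matrix.mul_apply]
    have h1 : ∀ h : Fin G, R p h * E12 h q = if h = q.1 then -B p.1 q.1 else 0 := by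
      intro h; by_cases hh : h = q.1 <;> simp [hE12, hR, hh]
    simp only [h1, Finset.sum_ite_eq']
    simp
  -- the key block computation
  have h11 : P + F12 * R = Δ' := by
    ext g h
    simp only [Matrix.add_apply, hFR, hP, hΔ', Matrix.of_apply, Matrix.diagonal_apply,
      Matrix.diagonal_mul, hcast]
    ring
  have hmul : fromBlocks 1 F12 0 1 * fromBlocks P Q R S * fromBlocks 1 E12 0 1
      = fromBlocks Δ' 0 R S0 := by
    rw [fromBlocks_multiply, fromBlocks_multiply]
    simp only [Matrix.one_mul, Matrix.mul_one, Matrix.zero_mul, Matrix.mul_zero,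
      add_zero, zero_add, h11]
    have h12 : Δ' * E12 + (Q + F12 * S) = 0 := by
      ext g q
      simp only [Matrix.add_apply, Matrix.zero_apply, hXE, hFS, hQ, Matrix.of_apply, hΔ',
        Matrix.diagonal_apply, Matrix.diagonal_mul, hcast]
      by_cases hgq : g = q.1
      · subst hgq; simp; ring
      · simp [hgq]; ring
    have h22 : R * E12 + S = S0 := by
      ext p q
      simp only [Matrix.add_apply, hRE, hS, hS0, Matrix.of_apply, Matrix.diagonal_apply]
      by_cases hpq : p = q
      · subst hpq; simp
      · simp [hpq]
    rw [h12, h22]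
  have hdetS0 : S0.det = ∏ g, a g ^ (L g - 1) := by
    rw [hS0, Matrix.det_diagonal, ← Finset.univ_sigma_univ, Finset.prod_sigma]
    simp [Finset.prod_const, card_ne_zero G L hL]
  calc (UB G L a B).det
      = ((UB G L a B).submatrix (blockEquiv G L hL).symm (blockEquiv G L hL).symm).det :=
        (Matrix.det_submatrix_equiv_self _ _).symm
    _ = (fromBlocks P Q R S).det := by rw [hsub]
    _ = (fromBlocks 1 F12 0 1).det * (fromBlocks P Q R S).det
          * (fromBlocks 1 E12 0 1).det := by
        rw [Matrix.det_fromBlocks_zero₂₁, Matrix.det_fromBlocks_zero₂₁, Matrix.det_one,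
          Matrix.det_one]
        ring
    _ = (fromBlocks 1 F12 0 1 * fromBlocks P Q R S * fromBlocks 1 E12 0 1).det := by
        rw [Matrix.det_mul, Matrix.det_mul]
    _ = (fromBlocks Δ' 0 R S0).det := by rw [hmul]
    _ = Δ'.det * S0.det := Matrix.det_fromBlocks_zero₁₂ _ _ _
    _ = (∏ g, a g ^ (L g - 1)) * Δ'.det := by rw [hdetS0]; ring

end Aux

/-- For a positive definite uniform-block matrix `Ω = A_Ω ∘ I(ℓ) + B_Ω ∘ J(ℓ)` with
`Δ_Ω = A_Ω + B_Ω L` and `L = diag(L_1, …, L_G)`: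
`log det Ω = ∑_g (L_g - 1) log(a_{Ω,gg}) + log det(Δ_Ω)`. -/
theorem UB_log_det (G : ℕ) (L : Fin G → ℕ) (hL : ∀ g, 0 < L g)
    (a : Fin G → ℝ) (B : Matrix (Fin G) (Fin G) ℝ) (hB : B.IsSymm)
    (hpd : (UB G L a B).PosDef) :
    Real.log (UB G L a B).det =
      (∑ g, ((L g : ℝ) - 1) * Real.log (a g)) +
        Real.log (Matrix.diagonal a + B * Matrix.diagonal (fun g => (L g : ℝ))).det := by
  classical
  have hΔ : (Matrix.diagonal a + B * Matrix.diagonal (fun g => (L g : ℝ))).det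
      = (Matrix.diagonal a + Matrix.diagonal (fun g => (L g : ℝ)) * B).det := by
    rw [← Matrix.det_transpose]
    congr 1
    simp [Matrix.transpose_add, Matrix.transpose_mul, Matrix.diagonal_transpose, hB.eq]
  have hdet := UB_det G L hL a B
  have hpos : 0 < (UB G L a B).det := hpd.det_pos
  rw [hdet] at hpos ⊢
  have hne : (∏ g, a g ^ (L g - 1)) ≠ 0 ∧
      (Matrix.diagonal a + Matrix.diagonal (fun g => (L g : ℝ)) * B).det ≠ 0 := by
    constructor <;> intro h <;> rw [h] at hpos <;> simp at hpos
  have hfac : ∀ g ∈ Finset.univ, a g ^ (L g - 1) ≠ 0 :=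
    fun g _ => Finset.prod_ne_zero_iff.mp hne.1 g (Finset.mem_univ g)
  rw [Real.log_mul hne.1 hne.2, Real.log_prod hfac, hΔ]
  congr 1
  refine Finset.sum_congr rfl fun g _ => ?_
  rw [Real.log_pow, Nat.cast_sub (hL g), Nat.cast_one]
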